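/- With Horner's perturbed recursion and assuming P(x) ≠ 0, the relative forward error satisfies the deterministic bound |fl(P(x)) − P(x)| / |P(x)| ≤ cond_1(P,x)·γ_{2n}, where cond_1(P,x) = (Σ_{i=0}^{n} |a_i x^i|)/|P(x)| and γ_{2n} = (1+u)^{2n} − 1. -/

import Mathlib

/-- Deterministic relative forward error bound for Horner's
perturbed recursion, assuming `P(x) ≠ 0`:
`|fl(P(x)) − P(x)|/|P(x)| ≤ cond₁(P,x)·γ_{2n}` where
`cond₁(P,x) = (Σ_{i=0}^n |a_i x^i|)/|P(x)|` and `γ_{2n} = (1+u)^{2n} − 1`. -/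
theorem stmt_9 (n : ℕ) (hn : 1 ≤ n) (x : ℝ) (a : ℕ → ℝ) (u : ℝ) (hu : 0 < u)
    (δ : ℕ → ℝ) (hδ : ∀ k, 1 ≤ k → k ≤ 2 * n → |δ k| ≤ u)
    (rhat : ℕ → ℝ) (h0 : rhat 0 = a n)
    (hodd : ∀ k, 1 ≤ k → k ≤ n →
      rhat (2 * k - 1) = rhat (2 * k - 2) * x * (1 + δ (2 * k - 1)))
    (heven : ∀ k, 1 ≤ k → k ≤ n →
      rhat (2 * k) = (rhat (2 * k - 1) + a (n - k)) * (1 + δ (2 * k)))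
    (hP : (∑ i ∈ Finset.range (n + 1), a i * x ^ i) ≠ 0) :
    |rhat (2 * n) - ∑ i ∈ Finset.range (n + 1), a i * x ^ i|
        / |∑ i ∈ Finset.range (n + 1), a i * x ^ i|
      ≤ ((∑ i ∈ Finset.range (n + 1), |a i * x ^ i|)
            / |∑ i ∈ Finset.range (n + 1), a i * x ^ i|)
          * ((1 + u) ^ (2 * n) - 1) := by
  set S : ℕ → ℝ := fun k => ∑ i ∈ Finset.range (k + 1), a (n - k + i) * x ^ i with hS
  set T : ℕ → ℝ := fun k => ∑ i ∈ Finset.range (k + 1), |a (n - k + i)| * |x| ^ i with hT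
  have hTnonneg : ∀ k, 0 ≤ T k := by
    intro k
    apply Finset.sum_nonneg
    intro i _
    positivity
  have hST : ∀ k, |S k| ≤ T k := by
    intro k
    refine le_trans (Finset.abs_sum_le_sum_abs _ _) ?_
    apply le_of_eq
    apply Finset.sum_congr rfl
    intro i _
    rw [abs_mul, abs_pow]
  have key : ∀ k, k ≤ n → |rhat (2 * k) - S k| ≤ ((1 + u) ^ (2 * k) - 1) * T k := by
    intro k
    induction k with
    | zero =>
      intro _
      simp [hS, h0]
    | succ k ih =>
      intro hk1
      have hk : k ≤ n := by omega
      have ihk := ih hk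
      -- recursion equations
      have he := heven (k + 1) (by omega) hk1
      have ho := hodd (k + 1) (by omega) hk1
      have e1 : 2 * (k + 1) - 1 = 2 * k + 1 := by omega
      have e2 : 2 * (k + 1) - 2 = 2 * k := by omega
      have e3 : 2 * (k + 1) = 2 * k + 2 := by omega
      rw [e1, e2] at ho
      rw [e1, e3] at he
      rw [ho] at he
      -- structural identities for S and T
      have hSsucc : S (k + 1) = S k * x + a (n - (k + 1)) := by
        simp only [hS]
        rw [Finset.sum_range_succ']
        have : ∀ i ∈ Finset.range (k + 1),
            a (n - (k + 1) + (i + 1)) * x ^ (i + 1) = (a (n - k + i) * x ^ i) * x := by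
          intro i _
          have : n - (k + 1) + (i + 1) = n - k + i := by omega
          rw [this, pow_succ]; ring
        rw [Finset.sum_congr rfl this, ← Finset.sum_mul]
        simp
      have hTsucc : T (k + 1) = T k * |x| + |a (n - (k + 1))| := by
        simp only [hT]
        rw [Finset.sum_range_succ']
        have : ∀ i ∈ Finset.range (k + 1),
            |a (n - (k + 1) + (i + 1))| * |x| ^ (i + 1) = (|a (n - k + i)| * |x| ^ i) * |x| := by
          intro i _
          have : n - (k + 1) + (i + 1) = n - k + i := by omega
          rw [this, pow_succ]; ring
        rw [Finset.sum_congr rfl this, ← Finset.sum_mul]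
        simp
      -- bounds on the deltas
      have hd1 : |δ (2 * k + 1)| ≤ u := hδ _ (by omega) (by omega)
      have hd2 : |δ (2 * k + 2)| ≤ u := hδ _ (by omega) (by omega)
      set d1 := δ (2 * k + 1)
      set d2 := δ (2 * k + 2)
      set A := a (n - (k + 1))
      -- error decomposition
      have hdecomp : rhat (2 * k + 2) - S (k + 1)
          = (rhat (2 * k) - S k) * x * (1 + d1) * (1 + d2)
            + S k * x * ((1 + d1) * (1 + d2) - 1) + A * d2 := by
        rw [he, hSsucc]; ring
      rw [e3, hdecomp]
      have hg : (0:ℝ) ≤ (1 + u) ^ (2 * k) - 1 := by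
        have : (1:ℝ) ≤ (1 + u) ^ (2 * k) := one_le_pow₀ (by linarith)
        linarith
      have habs1 : |(rhat (2 * k) - S k) * x * (1 + d1) * (1 + d2)|
          ≤ ((1 + u) ^ (2 * k) - 1) * T k * |x| * (1 + u) * (1 + u) := by
        rw [abs_mul, abs_mul, abs_mul]
        have h1 : |1 + d1| ≤ 1 + u := by
          have := abs_le.mp hd1; rw [abs_le]; constructor <;> linarith [this.1, this.2]
        have h2 : |1 + d2| ≤ 1 + u := by
          have := abs_le.mp hd2; rw [abs_le]; constructor <;> linarith [this.1, this.2]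
        have hx : (0:ℝ) ≤ |x| := abs_nonneg _
        have := ihk
        have hb1 : |rhat (2 * k) - S k| * |x| ≤ ((1 + u) ^ (2 * k) - 1) * T k * |x| :=
          mul_le_mul_of_nonneg_right ihk hx
        have hb2 : |rhat (2 * k) - S k| * |x| * |1 + d1|
            ≤ ((1 + u) ^ (2 * k) - 1) * T k * |x| * (1 + u) := by
          apply mul_le_mul hb1 h1 (abs_nonneg _)
          positivity
        apply mul_le_mul hb2 h2 (abs_nonneg _)
        positivity
      have habs2 : |S k * x * ((1 + d1) * (1 + d2) - 1)|
          ≤ T k * |x| * ((1 + u) * (1 + u) - 1) := by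
        rw [abs_mul, abs_mul]
        have h3 : |(1 + d1) * (1 + d2) - 1| ≤ (1 + u) * (1 + u) - 1 := by
          have e : (1 + d1) * (1 + d2) - 1 = d1 + d2 + d1 * d2 := by ring
          rw [e]
          calc |d1 + d2 + d1 * d2| ≤ |d1| + |d2| + |d1| * |d2| := by
                refine le_trans (abs_add_le _ _) ?_
                rw [abs_mul]
                exact add_le_add (abs_add_le _ _) le_rfl
            _ ≤ u + u + u * u := by
                have := mul_le_mul hd1 hd2 (abs_nonneg _) hu.le
                linarith
            _ = (1 + u) * (1 + u) - 1 := by ring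
        have hb : |S k| * |x| ≤ T k * |x| := mul_le_mul_of_nonneg_right (hST k) (abs_nonneg _)
        apply mul_le_mul hb h3 (abs_nonneg _)
        positivity
      have habs3 : |A * d2| ≤ |A| * u := by
        rw [abs_mul]; exact mul_le_mul_of_nonneg_left hd2 (abs_nonneg _)
      have hgsucc : ((1 + u) ^ (2 * k) - 1) * (1 + u) * (1 + u) + ((1 + u) * (1 + u) - 1)
          = (1 + u) ^ (2 * (k + 1)) - 1 := by
        have : 2 * (k + 1) = 2 * k + 1 + 1 := by omega
        rw [this, pow_succ, pow_succ]; ring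
      have hule : u ≤ (1 + u) ^ (2 * (k + 1)) - 1 := by
        have h1 : (1 + u) ^ 1 ≤ (1 + u) ^ (2 * (k + 1)) :=
          pow_le_pow_right₀ (by linarith) (by omega)
        simpa using by linarith [h1, pow_one (1 + u)]
      calc |(rhat (2 * k) - S k) * x * (1 + d1) * (1 + d2)
            + S k * x * ((1 + d1) * (1 + d2) - 1) + A * d2|
          ≤ |(rhat (2 * k) - S k) * x * (1 + d1) * (1 + d2)|
            + |S k * x * ((1 + d1) * (1 + d2) - 1)| + |A * d2| := by
            exact le_trans (abs_add_le _ _) (add_le_add (abs_add_le _ _) le_rfl)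
        _ ≤ ((1 + u) ^ (2 * k) - 1) * T k * |x| * (1 + u) * (1 + u)
            + T k * |x| * ((1 + u) * (1 + u) - 1) + |A| * u := by
            exact add_le_add (add_le_add habs1 habs2) habs3
        _ = (T k * |x|) * (((1 + u) ^ (2 * k) - 1) * (1 + u) * (1 + u)
              + ((1 + u) * (1 + u) - 1)) + |A| * u := by ring
        _ = (T k * |x|) * ((1 + u) ^ (2 * (k + 1)) - 1) + |A| * u := by rw [hgsucc]
        _ ≤ (T k * |x|) * ((1 + u) ^ (2 * (k + 1)) - 1)
            + |A| * ((1 + u) ^ (2 * (k + 1)) - 1) := by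
            exact add_le_add le_rfl (mul_le_mul_of_nonneg_left hule (abs_nonneg _))
        _ = ((1 + u) ^ (2 * (k + 1)) - 1) * T (k + 1) := by rw [hTsucc]; ring
  -- instantiate at k = n
  have hkey := key n le_rfl
  have hSn : S n = ∑ i ∈ Finset.range (n + 1), a i * x ^ i := by
    simp [hS]
  have hTn : T n = ∑ i ∈ Finset.range (n + 1), |a i * x ^ i| := by
    simp only [hT, Nat.sub_self, Nat.zero_add]
    apply Finset.sum_congr rfl
    intro i _
    rw [abs_mul, abs_pow]
  rw [hSn, hTn] at hkey
  have hPpos : 0 < |∑ i ∈ Finset.range (n + 1), a i * x ^ i| := abs_pos.mpr hP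
  rw [div_mul_eq_mul_div, div_le_div_iff₀ hPpos hPpos]
  calc |rhat (2 * n) - ∑ i ∈ Finset.range (n + 1), a i * x ^ i|
        * |∑ i ∈ Finset.range (n + 1), a i * x ^ i|
      ≤ (((1 + u) ^ (2 * n) - 1) * (∑ i ∈ Finset.range (n + 1), |a i * x ^ i|))
        * |∑ i ∈ Finset.range (n + 1), a i * x ^ i| := by
        apply mul_le_mul_of_nonneg_right _ hPpos.le
        linarith [hkey]
    _ = (∑ i ∈ Finset.range (n + 1), |a i * x ^ i|) * ((1 + u) ^ (2 * n) - 1)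
        * |∑ i ∈ Finset.range (n + 1), a i * x ^ i| := by ring
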